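/- arXiv:2007.00307 — 5 statements merged into one kernel-verified Lean document; each statement's English description precedes it below -/
import Mathlib

section
/- Let n ≥ 2 be an integer and let q be a real number with 0 ≤ q ≤ 2^{-n}. Let Q be the probability distribution on (ZMod 2)^n with Q(f) = q for every nonzero f (and hence Q(0) = 1 − (2^n − 1)q). Define the inclusive model P by P(f) = 1/2 − (1/2)(1 − 2^n q)^{2^{1−n}} for every nonzero f (the same conclusion holds with the + sign). Then P induces Q, i.e., for every f ∈ (ZMod 2)^n, Q(f) = Σ over subsets S of the nonzero elements of (ZMod 2)^n with Σ_{s∈S} s = f of ∏_{s∈S} P(s) · ∏_{s∉S, s≠0} (1 − P(s)). -/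
open Finset

namespace IndAux

noncomputable def chi (x : ZMod 2) : ℝ := if x = 0 then 1 else -1

lemma chi_zero : chi 0 = 1 := if_pos rfl

lemma chi_one : chi 1 = -1 := if_neg one_ne_zero

lemma zmod2_cases (x : ZMod 2) : x = 0 ∨ x = 1 := by revert x; decide

lemma chi_add (x y : ZMod 2) : chi (x + y) = chi x * chi y := by
  have h11 : (1 : ZMod 2) + 1 = 0 := by decide
  rcases zmod2_cases x with hx | hx <;> rcases zmod2_cases y with hy | hy <;>
      subst hx <;> subst hy
  · simp [chi]
  · simp [chi]
  · simp [chi]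
  · rw [h11, chi_zero, chi_one]; norm_num

lemma chi_mul_self (x : ZMod 2) : chi x * chi x = 1 := by
  rcases zmod2_cases x with h | h <;> subst h <;> simp [chi]

variable {n : ℕ}

noncomputable def b (t f : Fin n → ZMod 2) : ℝ := ∏ i, chi (t i * f i)

lemma b_comm (t f : Fin n → ZMod 2) : b t f = b f t := by
  unfold b; exact Finset.prod_congr rfl fun i _ => by rw [mul_comm]

lemma b_zero_right (t : Fin n → ZMod 2) : b t 0 = 1 := by
  unfold b; simp [chi_zero]

lemma b_zero_left (f : Fin n → ZMod 2) : b 0 f = 1 := by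
  rw [b_comm]; exact b_zero_right f

lemma b_add_right (t f g : Fin n → ZMod 2) : b t (f + g) = b t f * b t g := by
  unfold b
  rw [← Finset.prod_mul_distrib]
  exact Finset.prod_congr rfl fun i _ => by
    simp only [Pi.add_apply, mul_add, chi_add]

lemma b_mul_self (t f : Fin n → ZMod 2) : b t f * b t f = 1 := by
  unfold b
  rw [← Finset.prod_mul_distrib]
  exact Finset.prod_eq_one fun i _ => chi_mul_self _

lemma b_eq_one_or (t f : Fin n → ZMod 2) : b t f = 1 ∨ b t f = -1 :=
  mul_self_eq_one_iff.mp (b_mul_self t f)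

lemma b_sum_right (t : Fin n → ZMod 2) (S : Finset (Fin n → ZMod 2)) :
    b t (∑ s ∈ S, s) = ∏ s ∈ S, b t s := by
  induction S using Finset.cons_induction with
  | empty => simp [b_zero_right]
  | cons a s ha ih => rw [Finset.sum_cons, Finset.prod_cons, b_add_right, ih]

lemma sum_b_ne (t : Fin n → ZMod 2) (ht : t ≠ 0) : ∑ f : Fin n → ZMod 2, b t f = 0 := by
  obtain ⟨i₀, hi₀⟩ : ∃ i, t i ≠ 0 := by
    by_contra h
    push_neg at h
    exact ht (funext fun i => h i)
  have hti : t i₀ = 1 := by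
    rcases zmod2_cases (t i₀) with h | h
    · exact absurd h hi₀
    · exact h
  set g : Fin n → ZMod 2 := fun j => if j = i₀ then 1 else 0 with hg
  have hbg : b t g = -1 := by
    unfold b
    rw [Finset.prod_eq_single i₀]
    · simp [hg, hti, chi_one]
    · intro j _ hj; simp [hg, hj, chi_zero]
    · intro h; exact absurd (Finset.mem_univ i₀) h
  have key : ∑ f : Fin n → ZMod 2, b t f = ∑ f : Fin n → ZMod 2, b t (f + g) :=
    (Fintype.sum_equiv (Equiv.addRight g) (fun x => b t (x + g)) (fun y => b t y)
      (fun x => rfl)).symm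
  have : ∑ f : Fin n → ZMod 2, b t f = -∑ f : Fin n → ZMod 2, b t f := by
    calc ∑ f : Fin n → ZMod 2, b t f = ∑ f : Fin n → ZMod 2, b t (f + g) := key
    _ = ∑ f : Fin n → ZMod 2, b t f * b t g := by
        exact Finset.sum_congr rfl fun f _ => b_add_right t f g
    _ = -∑ f : Fin n → ZMod 2, b t f := by
        rw [hbg]; simp [Finset.sum_mul]
  linarith

lemma sum_b (t : Fin n → ZMod 2) :
    ∑ f : Fin n → ZMod 2, b t f = if t = 0 then (2 : ℝ) ^ n else 0 := by
  by_cases ht : t = 0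
  · subst ht
    simp [b_zero_left, Finset.card_univ]
  · rw [if_neg ht]; exact sum_b_ne t ht

lemma add_self (f : Fin n → ZMod 2) : f + f = 0 := by
  funext i
  have : ∀ x : ZMod 2, x + x = 0 := by decide
  exact this (f i)

lemma transform_inj (F : (Fin n → ZMod 2) → ℝ)
    (h : ∀ t, ∑ f : Fin n → ZMod 2, F f * b t f = 0) : ∀ u, F u = 0 := by
  intro u
  have key : ∑ t : Fin n → ZMod 2, (∑ f : Fin n → ZMod 2, F f * b t f) * b t u = 0 := by
    simp [h]
  have expand : ∑ t : Fin n → ZMod 2, (∑ f : Fin n → ZMod 2, F f * b t f) * b t u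
      = (2 : ℝ) ^ n * F u := by
    calc ∑ t : Fin n → ZMod 2, (∑ f : Fin n → ZMod 2, F f * b t f) * b t u
        = ∑ t : Fin n → ZMod 2, ∑ f : Fin n → ZMod 2, F f * (b t f * b t u) := by
          refine Finset.sum_congr rfl fun t _ => ?_
          rw [Finset.sum_mul]
          exact Finset.sum_congr rfl fun f _ => by ring
      _ = ∑ f : Fin n → ZMod 2, ∑ t : Fin n → ZMod 2, F f * (b t f * b t u) :=
          Finset.sum_comm
      _ = ∑ f : Fin n → ZMod 2, F f * ∑ t : Fin n → ZMod 2, b t (f + u) := by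
          refine Finset.sum_congr rfl fun f _ => ?_
          rw [Finset.mul_sum]
          exact Finset.sum_congr rfl fun t _ => by rw [b_add_right]
      _ = ∑ f : Fin n → ZMod 2, F f * (if f + u = 0 then (2:ℝ)^n else 0) := by
          refine Finset.sum_congr rfl fun f _ => ?_
          congr 1
          calc ∑ t : Fin n → ZMod 2, b t (f + u)
              = ∑ t : Fin n → ZMod 2, b (f + u) t :=
                Finset.sum_congr rfl fun t _ => b_comm t (f+u)
            _ = _ := sum_b (f + u)
      _ = (2:ℝ)^n * F u := by
          rw [Finset.sum_eq_single u]
          · have : u + u = 0 := add_self u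
            rw [if_pos this]; ring
          · intro f _ hf
            have : f + u ≠ 0 := by
              intro h0
              apply hf
              have := congrArg (· + u) h0
              simpa [add_assoc, add_self u] using this
            rw [if_neg this, mul_zero]
          · intro h; exact absurd (Finset.mem_univ u) h
  have h2 : (2:ℝ)^n * F u = 0 := by rw [← expand]; exact key
  have : (2:ℝ)^n ≠ 0 := by positivity
  exact (mul_eq_zero.mp h2).resolve_left this

end IndAux

namespace IndAux

lemma transform_R {n : ℕ} (E : Finset (Fin n → ZMod 2)) (P : (Fin n → ZMod 2) → ℝ)
    (t : Fin n → ZMod 2) :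
    ∑ f : Fin n → ZMod 2,
      (∑ S ∈ E.powerset.filter (fun S => ∑ s ∈ S, s = f),
        (∏ s ∈ S, P s) * ∏ s ∈ E \ S, (1 - P s)) * b t f
    = ∏ s ∈ E, (P s * b t s + (1 - P s)) := by
  have step1 : ∀ f : Fin n → ZMod 2,
      (∑ S ∈ E.powerset.filter (fun S => ∑ s ∈ S, s = f),
        (∏ s ∈ S, P s) * ∏ s ∈ E \ S, (1 - P s)) * b t f
      = ∑ S ∈ E.powerset.filter (fun S => ∑ s ∈ S, s = f),
        ((∏ s ∈ S, P s) * ∏ s ∈ E \ S, (1 - P s)) * b t (∑ s ∈ S, s) := by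
    intro f
    rw [Finset.sum_mul]
    refine Finset.sum_congr rfl fun S hS => ?_
    rw [(Finset.mem_filter.mp hS).2]
  calc ∑ f : Fin n → ZMod 2,
      (∑ S ∈ E.powerset.filter (fun S => ∑ s ∈ S, s = f),
        (∏ s ∈ S, P s) * ∏ s ∈ E \ S, (1 - P s)) * b t f
      = ∑ f : Fin n → ZMod 2, ∑ S ∈ E.powerset.filter (fun S => ∑ s ∈ S, s = f),
        ((∏ s ∈ S, P s) * ∏ s ∈ E \ S, (1 - P s)) * b t (∑ s ∈ S, s) :=
        Finset.sum_congr rfl fun f _ => step1 f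
    _ = ∑ S ∈ E.powerset, ((∏ s ∈ S, P s) * ∏ s ∈ E \ S, (1 - P s)) * b t (∑ s ∈ S, s) :=
        Finset.sum_fiberwise_of_maps_to (fun S _ => Finset.mem_univ _) _
    _ = ∑ S ∈ E.powerset, (∏ s ∈ S, P s * b t s) * ∏ s ∈ E \ S, (1 - P s) := by
        refine Finset.sum_congr rfl fun S _ => ?_
        rw [b_sum_right, Finset.prod_mul_distrib]
        ring
    _ = ∏ s ∈ E, (P s * b t s + (1 - P s)) := (Finset.prod_add _ _ _).symm

end IndAux

open IndAux

/-- For `n ≥ 2` and `0 ≤ q ≤ 2^{-n}`, the uniform exclusive error model `Q`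
(with `Q f = q` for all nonzero `f` and `Q 0 = 1 - (2^n - 1) q`) is induced by the constant
inclusive error model `P f = 1/2 - (1/2)(1 - 2^n q)^{2^{1-n}}`. -/
theorem inclusive_induces_uniform_exclusive
    (n : ℕ) (hn : 2 ≤ n) (q : ℝ) (hq0 : 0 ≤ q) (hq1 : q ≤ ((2 : ℝ) ^ n)⁻¹)
    (Q P : (Fin n → ZMod 2) → ℝ)
    (hQne : ∀ f : Fin n → ZMod 2, f ≠ 0 → Q f = q)
    (hQ0 : Q 0 = 1 - ((2 : ℝ) ^ n - 1) * q)
    (hP : ∀ f : Fin n → ZMod 2, f ≠ 0 →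
      P f = 1 / 2 - 1 / 2 * (1 - 2 ^ n * q) ^ ((2 : ℝ) ^ (1 - (n : ℝ)))) :
    ∀ f : Fin n → ZMod 2,
      Q f = ∑ S ∈ (univ.filter fun g : Fin n → ZMod 2 => g ≠ 0).powerset.filter
              (fun S => ∑ s ∈ S, s = f),
            (∏ s ∈ S, P s) *
              ∏ s ∈ (univ.filter fun g : Fin n → ZMod 2 => g ≠ 0) \ S, (1 - P s) := by
  set E : Finset (Fin n → ZMod 2) := univ.filter fun g => g ≠ 0 with hE
  set x : ℝ := 1 - 2 ^ n * q with hx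
  set r : ℝ := (2 : ℝ) ^ (1 - (n : ℝ)) with hr
  set c : ℝ := x ^ r with hc
  set p : ℝ := 1 / 2 - 1 / 2 * c with hp
  have hx0 : 0 ≤ x := by
    have h2n : (0:ℝ) < 2 ^ n := by positivity
    have h1 : 2 ^ n * q ≤ 1 := by
      calc (2:ℝ) ^ n * q ≤ 2 ^ n * (2 ^ n)⁻¹ :=
            mul_le_mul_of_nonneg_left hq1 (le_of_lt h2n)
        _ = 1 := mul_inv_cancel₀ (ne_of_gt h2n)
    rw [hx]; linarith
  set R : (Fin n → ZMod 2) → ℝ := fun f =>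
    ∑ S ∈ E.powerset.filter (fun S => ∑ s ∈ S, s = f),
      (∏ s ∈ S, P s) * ∏ s ∈ E \ S, (1 - P s) with hR
  -- cardinality of the whole space
  have hcard : (Finset.univ : Finset (Fin n → ZMod 2)).card = 2 ^ n := by
    simp [Finset.card_univ]
  -- transform of Q
  have hQt : ∀ t : Fin n → ZMod 2,
      ∑ f : Fin n → ZMod 2, Q f * b t f = if t = 0 then 1 else x := by
    intro t
    have h0mem : (0 : Fin n → ZMod 2) ∈ (Finset.univ : Finset (Fin n → ZMod 2)) :=
      Finset.mem_univ _
    have hsplit : ∑ f : Fin n → ZMod 2, Q f * b t f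
        = Q 0 * b t 0 + ∑ f ∈ Finset.univ.erase 0, Q f * b t f :=
      (Finset.add_sum_erase _ _ h0mem).symm
    have herase : ∑ f ∈ Finset.univ.erase 0, Q f * b t f
        = q * ((∑ f : Fin n → ZMod 2, b t f) - 1) := by
      have : ∑ f ∈ Finset.univ.erase 0, Q f * b t f
          = ∑ f ∈ Finset.univ.erase 0, q * b t f := by
        refine Finset.sum_congr rfl fun f hf => ?_
        rw [hQne f (Finset.ne_of_mem_erase hf)]
      rw [this, ← Finset.mul_sum, Finset.sum_erase_eq_sub h0mem, b_zero_right]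
    rw [hsplit, herase, b_zero_right, sum_b, hQ0]
    by_cases ht : t = 0
    · rw [if_pos ht, if_pos ht]; ring
    · rw [if_neg ht, if_neg ht, hx]; ring
  -- transform of R
  have hRt : ∀ t : Fin n → ZMod 2,
      ∑ f : Fin n → ZMod 2, R f * b t f = if t = 0 then 1 else x := by
    intro t
    rw [hR]
    rw [transform_R E P t]
    by_cases ht : t = 0
    · rw [if_pos ht, ht]
      refine Finset.prod_eq_one fun s _ => ?_
      rw [b_zero_left]; ring
    · rw [if_neg ht]
      -- all elements of E are nonzero, so P = p there
      have hPE : ∀ s ∈ E, P s = p := fun s hs =>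
        hP s (by simpa [hE] using hs)
      -- split the product along b t s = -1
      have hsplit := Finset.prod_filter_mul_prod_filter_not E
        (fun s => b t s = -1) (fun s => P s * b t s + (1 - P s))
      have h1 : ∏ s ∈ E.filter (fun s => b t s = -1), (P s * b t s + (1 - P s))
          = c ^ (E.filter (fun s => b t s = -1)).card := by
        rw [Finset.prod_congr rfl (fun s hs => ?_), Finset.prod_const]
        have hsE : s ∈ E := Finset.mem_of_mem_filter _ hs
        have hb : b t s = -1 := (Finset.mem_filter.mp hs).2
        rw [hPE s hsE, hb, hp]; ring
      have h2 : ∏ s ∈ E.filter (fun s => ¬ b t s = -1), (P s * b t s + (1 - P s)) = 1 := by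
        refine Finset.prod_eq_one fun s hs => ?_
        have hb : b t s = 1 :=
          (b_eq_one_or t s).resolve_right (Finset.mem_filter.mp hs).2
        rw [hb]; ring
      -- identify the filtered set with the global one
      have hseteq : E.filter (fun s => b t s = -1)
          = Finset.univ.filter (fun s => b t s = -1) := by
        ext s
        simp only [hE, Finset.mem_filter, Finset.mem_univ, true_and]
        constructor
        · rintro ⟨_, h⟩; exact h
        · intro h
          refine ⟨fun h0 => ?_, h⟩
          rw [h0, b_zero_right] at h
          norm_num at h
      set m : ℕ := (Finset.univ.filter (fun s => b t s = -1)).card with hm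
      -- count: m = 2^(n-1)
      have hmcard : m = 2 ^ (n - 1) := by
        have hs0 := sum_b_ne t ht
        have hdec : ∑ f : Fin n → ZMod 2, b t f
            = ∑ f ∈ Finset.univ.filter (fun s => b t s = -1), b t f
              + ∑ f ∈ Finset.univ.filter (fun s => ¬ b t s = -1), b t f :=
          (Finset.sum_filter_add_sum_filter_not _ _ _).symm
        have hA : ∑ f ∈ Finset.univ.filter (fun s => b t s = -1), b t f = -(m : ℝ) := by
          rw [Finset.sum_congr rfl (fun f hf => (Finset.mem_filter.mp hf).2),
            Finset.sum_const, hm]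
          simp
        have hB : ∑ f ∈ Finset.univ.filter (fun s => ¬ b t s = -1), b t f
            = ((2 ^ n - m : ℕ) : ℝ) := by
          rw [Finset.sum_congr rfl
            (fun f hf => (b_eq_one_or t f).resolve_right (Finset.mem_filter.mp hf).2),
            Finset.sum_const]
          have hcards : (Finset.univ.filter (fun s => ¬ b t s = -1)).card = 2 ^ n - m := by
            have := Finset.card_filter_add_card_filter_not
              (s := (Finset.univ : Finset (Fin n → ZMod 2)))
              (p := fun s => b t s = -1)
            rw [hcard] at this
            omega
          rw [hcards]; simp
        have hmle : m ≤ 2 ^ n := by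
          rw [← hcard]; exact Finset.card_filter_le _ _
        have hreal : (2 * m : ℕ) = ((2 ^ n : ℕ) : ℝ) := by
          push_cast [Nat.cast_sub hmle] at hdec hs0 ⊢
          rw [hdec, hA, hB] at hs0
          push_cast [Nat.cast_sub hmle] at hs0
          push_cast
          linarith
        have hnat : 2 * m = 2 ^ n := by exact_mod_cast hreal
        have hpow : (2:ℕ) ^ n = 2 * 2 ^ (n - 1) := by
          rw [← pow_succ']
          congr 1
          omega
        omega
      -- evaluate c ^ (2^(n-1)) = x
      have hcm : c ^ (2 ^ (n - 1) : ℕ) = x := by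
        rw [hc, ← Real.rpow_natCast (x ^ r) (2 ^ (n - 1)), ← Real.rpow_mul hx0]
        have hcast : ((2 ^ (n - 1) : ℕ) : ℝ) = (2:ℝ) ^ (((n - 1 : ℕ)) : ℝ) := by
          push_cast
          rw [Real.rpow_natCast]
        have hexp : r * ((2 ^ (n - 1) : ℕ) : ℝ) = 1 := by
          rw [hcast, hr, ← Real.rpow_add (by norm_num : (0:ℝ) < 2)]
          have : ((n - 1 : ℕ) : ℝ) = (n : ℝ) - 1 := by
            rw [Nat.cast_sub (by omega : 1 ≤ n)]; norm_num
          rw [this]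
          norm_num
        rw [hexp, Real.rpow_one]
      rw [← hsplit, h1, h2, hseteq, ← hm, hmcard, hcm, mul_one]
  -- conclude by injectivity of the transform
  intro f
  have hzero : ∀ t, ∑ g : Fin n → ZMod 2, (Q g - R g) * b t g = 0 := by
    intro t
    have : ∑ g : Fin n → ZMod 2, (Q g - R g) * b t g
        = (∑ g : Fin n → ZMod 2, Q g * b t g) - ∑ g : Fin n → ZMod 2, R g * b t g := by
      rw [← Finset.sum_sub_distrib]
      exact Finset.sum_congr rfl fun g _ => by ring
    rw [this, hQt, hRt, sub_self]
  have := transform_inj _ hzero f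
  have hQR : Q f = R f := by linarith
  rw [hQR, hR]
end

section
/- Let n ≥ 2 and let E be the set of nonzero elements of (ZMod 2)^n. For g ∈ (ZMod 2)^n and a natural number k, let A_g^k be the set of subsets S ⊆ E with |S| = k and Σ_{s∈S} s = g. Then for any two nonzero elements f, f' of (ZMod 2)^n and any k, the sets A_f^k and A_{f'}^k have the same cardinality. -/
open Finset

lemma exists_sum_set (n : ℕ) (f f' : Fin n → ZMod 2) (hf : f ≠ 0) (hf' : f' ≠ 0) :
    ∃ T : Finset (Fin n), ∑ i ∈ T, f i = 1 ∧ ∑ i ∈ T, f' i = 1 := by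
  have h1 : ∀ a : ZMod 2, a ≠ 0 → a = 1 := by decide
  obtain ⟨i, hi⟩ : ∃ i, f i ≠ 0 := by
    by_contra h; push_neg at h; exact hf (funext h)
  obtain ⟨j, hj⟩ : ∃ j, f' j ≠ 0 := by
    by_contra h; push_neg at h; exact hf' (funext h)
  have hfi := h1 _ hi
  have hfj := h1 _ hj
  by_cases h2 : f' i = 1
  · exact ⟨{i}, by simp [hfi, h2]⟩
  by_cases h3 : f j = 1
  · exact ⟨{j}, by simp [h3, hfj]⟩
  have hij : i ≠ j := by rintro rfl; exact h3 hfi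
  have hf'i : f' i = 0 := by
    rcases (by decide : ∀ a : ZMod 2, a = 0 ∨ a = 1) (f' i) with h | h
    · exact h
    · exact absurd h h2
  have hfj0 : f j = 0 := by
    rcases (by decide : ∀ a : ZMod 2, a = 0 ∨ a = 1) (f j) with h | h
    · exact h
    · exact absurd h h3
  refine ⟨{i, j}, ?_⟩
  rw [Finset.sum_pair hij, Finset.sum_pair hij, hfi, hfj, hf'i, hfj0]
  constructor <;> ring

lemma exists_addEquiv (n : ℕ) (f f' : Fin n → ZMod 2) (hf : f ≠ 0) (hf' : f' ≠ 0) :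
    ∃ e : (Fin n → ZMod 2) ≃+ (Fin n → ZMod 2), e f = f' := by
  obtain ⟨T, hT1, hT2⟩ := exists_sum_set n f f' hf hf'
  set v : Fin n → ZMod 2 := f + f' with hv
  have hsumv : ∑ i ∈ T, v i = 0 := by
    simp only [hv, Pi.add_apply, Finset.sum_add_distrib, hT1, hT2]; decide
  set em : (Fin n → ZMod 2) → (Fin n → ZMod 2) := fun x => x + (∑ i ∈ T, x i) • v with hem
  have hinv : ∀ x, em (em x) = x := by
    intro x
    simp only [hem]
    have : ∑ i ∈ T, (x + (∑ i ∈ T, x i) • v) i = ∑ i ∈ T, x i := by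
      simp only [Pi.add_apply, Pi.smul_apply, Finset.sum_add_distrib, ← Finset.mul_sum,
        smul_eq_mul, hsumv, mul_zero, add_zero]
    rw [this]
    have h2 : ∀ c : ZMod 2, c • v + c • v = 0 := by
      intro c; rw [← add_smul]
      have : c + c = 0 := by
        rcases (by decide : ∀ a : ZMod 2, a = 0 ∨ a = 1) c with h | h <;> simp [h] <;> decide
      rw [this, zero_smul]
    rw [add_assoc, h2, add_zero]
  refine ⟨⟨⟨em, em, hinv, hinv⟩, ?_⟩, ?_⟩
  · intro x y
    simp only [hem, Equiv.coe_fn_mk]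
    have : ∑ i ∈ T, (x + y) i = ∑ i ∈ T, x i + ∑ i ∈ T, y i := by
      simp [Finset.sum_add_distrib]
    rw [this, add_smul]
    abel
  · show em f = f'
    simp only [hem, hT1, one_smul, hv]
    funext i
    simp only [Pi.add_apply]
    generalize f i = a
    generalize f' i = b
    revert a b
    decide

/-- For `n ≥ 2`, let `E` be the set of nonzero elements of `(ZMod 2)^n`.
For any two nonzero elements `f, f'` and any `k`, the number of `k`-element subsets of `E`
summing to `f` equals the number of `k`-element subsets of `E` summing to `f'`. -/
theorem card_subsets_summing_eq (n : ℕ) (hn : 2 ≤ n) (f f' : Fin n → ZMod 2)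
    (hf : f ≠ 0) (hf' : f' ≠ 0) (k : ℕ) :
    ((univ.filter fun g : Fin n → ZMod 2 => g ≠ 0).powerset.filter
        (fun S => S.card = k ∧ ∑ s ∈ S, s = f)).card
      = ((univ.filter fun g : Fin n → ZMod 2 => g ≠ 0).powerset.filter
        (fun S => S.card = k ∧ ∑ s ∈ S, s = f')).card := by
  obtain ⟨e, he⟩ := exists_addEquiv n f f' hf hf'
  have key : ∀ (a b : Fin n → ZMod 2) (e : (Fin n → ZMod 2) ≃+ (Fin n → ZMod 2)), e a = b →
      ∀ S, S ∈ ((univ.filter fun g : Fin n → ZMod 2 => g ≠ 0).powerset.filter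
        (fun S => S.card = k ∧ ∑ s ∈ S, s = a)) →
      S.image e ∈ ((univ.filter fun g : Fin n → ZMod 2 => g ≠ 0).powerset.filter
        (fun S => S.card = k ∧ ∑ s ∈ S, s = b)) := by
    intro a b e heab S hS
    simp only [Finset.mem_filter, Finset.mem_powerset] at hS ⊢
    obtain ⟨hsub, hcard, hsum⟩ := hS
    refine ⟨?_, ?_, ?_⟩
    · intro x hx
      simp only [Finset.mem_image] at hx
      obtain ⟨s, hs, rfl⟩ := hx
      have := hsub hs
      simp only [Finset.mem_filter, Finset.mem_univ, true_and] at this ⊢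
      intro h0
      exact this (by simpa using e.injective (by simpa using h0))
    · rw [Finset.card_image_of_injective _ e.injective, hcard]
    · rw [Finset.sum_image (fun x _ y _ h => e.injective h), ← map_sum, hsum, heab]
  refine Finset.card_nbij' (fun S => S.image e) (fun S => S.image e.symm)
    (key f f' e he) (key f' f e.symm (by rw [← he, AddEquiv.symm_apply_apply])) ?_ ?_
  · intro S hS
    simp [Finset.image_image, Function.comp_def]
  · intro S hS
    simp [Finset.image_image, Function.comp_def]
end

section
/- Let n ≥ 2, let E be the set of nonzero elements of (ZMod 2)^n (so |E| = 2^n − 1), and let p be a real number. Then the sum over all subsets S ⊆ E with Σ_{s∈S} s = 0 of p^{|S|} (1 − p)^{2^n − 1 − |S|} equals 2^{-n} + (1 − 2^{-n})(1 − 2p)^{2^{n−1}}. -/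
open Finset

noncomputable def mm (x : ZMod 2) : ℝ := if x = 0 then 1 else -1
lemma mm_zero : mm 0 = 1 := by simp [mm]
lemma mm_add (a b : ZMod 2) : mm (a + b) = mm a * mm b := by
  have h01 : ∀ x : ZMod 2, x = 0 ∨ x = 1 := by decide
  rcases h01 a with rfl | rfl <;> rcases h01 b with rfl | rfl <;> simp (config := {decide := true}) [mm]
lemma mm_sum {ι : Type*} (S : Finset ι) (f : ι → ZMod 2) :
    mm (∑ s ∈ S, f s) = ∏ s ∈ S, mm (f s) := by
  induction S using Finset.cons_induction with
  | empty => simp [mm_zero]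
  | cons a s ha ih => rw [Finset.sum_cons, Finset.prod_cons, mm_add, ih]

def dot {n : ℕ} (g x : Fin n → ZMod 2) : ZMod 2 := ∑ i, g i * x i

lemma dot_add {n : ℕ} (g x y : Fin n → ZMod 2) : dot g (x + y) = dot g x + dot g y := by
  simp [dot, mul_add, Finset.sum_add_distrib]

lemma dot_zero {n : ℕ} (g : Fin n → ZMod 2) : dot g 0 = 0 := by simp [dot]

lemma dot_zero' {n : ℕ} (x : Fin n → ZMod 2) : dot 0 x = 0 := by simp [dot]

lemma dot_sum {n : ℕ} (g : Fin n → ZMod 2) {ι : Type*} (S : Finset ι)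
    (f : ι → (Fin n → ZMod 2)) : dot g (∑ s ∈ S, f s) = ∑ s ∈ S, dot g (f s) := by
  induction S using Finset.cons_induction with
  | empty => simp [dot_zero]
  | cons a s ha ih => rw [Finset.sum_cons, Finset.sum_cons, dot_add, ih]

lemma sum_mm_dot {n : ℕ} (x : Fin n → ZMod 2) :
    ∑ g : Fin n → ZMod 2, mm (dot g x) = if x = 0 then (2:ℝ)^n else 0 := by
  have h1 : ∀ g : Fin n → ZMod 2, mm (dot g x) = ∏ i, mm (g i * x i) := fun g => mm_sum _ _
  simp_rw [h1]
  rw [← Fintype.prod_sum (f := fun (i : Fin n) (a : ZMod 2) => mm (a * x i))]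
  have h2 : ∀ i, ∑ a : ZMod 2, mm (a * x i) = 1 + mm (x i) := by
    intro i
    have hu : (univ : Finset (ZMod 2)) = {0, 1} := by decide
    rw [hu, Finset.sum_insert (by decide), Finset.sum_singleton]
    norm_num [mm_zero]
  simp_rw [h2]
  by_cases hx : x = 0
  · simp [hx, mm_zero]; norm_num
  · rw [if_neg hx]
    obtain ⟨i, hi⟩ := Function.ne_iff.mp hx
    refine Finset.prod_eq_zero (Finset.mem_univ i) ?_
    have hone : ∀ a : ZMod 2, a ≠ 0 → a = 1 := by decide
    rw [hone _ hi]; norm_num [mm]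

lemma card_dot_one {n : ℕ} {g : Fin n → ZMod 2} (hg : g ≠ 0) :
    (univ.filter fun x : Fin n → ZMod 2 => dot g x = 1).card = 2 ^ (n - 1) := by
  obtain ⟨i, hi⟩ := Function.ne_iff.mp hg
  have hone : ∀ a : ZMod 2, a ≠ 0 → a = 1 := by decide
  have hgi : g i = 1 := hone _ (by simpa using hi)
  set δ : Fin n → ZMod 2 := Pi.single i 1 with hδ
  have hdotδ : dot g δ = 1 := by
    rw [dot, Finset.sum_eq_single i]
    · simp [hδ, hgi]
    · intro j _ hj; simp [hδ, Pi.single_eq_of_ne hj]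
    · simp
  have hadd : ∀ x : Fin n → ZMod 2, x + δ + δ = x := by
    intro x; funext j
    simp [add_assoc]
    exact CharTwo.add_self_eq_zero _
  have hcard : (univ.filter fun x : Fin n → ZMod 2 => dot g x = 0).card
      = (univ.filter fun x : Fin n → ZMod 2 => dot g x = 1).card := by
    refine Finset.card_nbij' (fun x => x + δ) (fun x => x + δ) ?_ ?_ ?_ ?_
    · intro a ha
      simp only [Finset.coe_filter, Set.mem_setOf_eq, Finset.mem_filter, Finset.mem_univ, true_and] at ha ⊢
      rw [dot_add, ha, hdotδ, zero_add]
    · intro a ha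
      simp only [Finset.coe_filter, Set.mem_setOf_eq, Finset.mem_filter, Finset.mem_univ, true_and] at ha ⊢
      rw [dot_add, ha, hdotδ]; decide
    · intro a _; exact hadd a
    · intro a _; exact hadd a
  have hsplit : (univ.filter fun x : Fin n → ZMod 2 => dot g x = 0).card
      + (univ.filter fun x : Fin n → ZMod 2 => dot g x = 1).card = 2 ^ n := by
    have h01 : (univ.filter fun x : Fin n → ZMod 2 => dot g x = 1)
        = (univ.filter fun x : Fin n → ZMod 2 => ¬ dot g x = 0) := by
      apply Finset.filter_congr; intro x _
      constructor
      · intro h; rw [h]; decide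
      · intro h; exact hone _ h
    rw [h01, Finset.card_filter_add_card_filter_not, Finset.card_univ]
    simp [Fintype.card_fun]
  have hn1 : n ≠ 0 := by rintro rfl; exact hg (funext fun j => absurd j.2 (by simp))
  have hpow : 2 ^ n = 2 * 2 ^ (n - 1) := by
    rw [← pow_succ']; congr 1; omega
  omega

lemma prod_E {n : ℕ} (p : ℝ) {g : Fin n → ZMod 2} (hg : g ≠ 0) :
    ∏ s ∈ (univ.filter fun x : Fin n → ZMod 2 => x ≠ 0),
      (p * mm (dot g s) + (1 - p)) = (1 - 2*p) ^ 2 ^ (n - 1) := by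
  have hfac : ∀ s : Fin n → ZMod 2,
      p * mm (dot g s) + (1 - p) = if dot g s = 0 then (1:ℝ) else (1 - 2*p) := by
    intro s
    by_cases h : dot g s = 0 <;> simp [h, mm] <;> ring
  rw [Finset.prod_congr rfl (fun s _ => hfac s), Finset.prod_ite, Finset.prod_const,
    Finset.prod_const, one_pow, one_mul, Finset.filter_filter]
  have hone : ∀ a : ZMod 2, a ≠ 0 → a = 1 := by decide
  have hset : (univ.filter fun x : Fin n → ZMod 2 => x ≠ 0 ∧ ¬ dot g x = 0)
      = univ.filter fun x : Fin n → ZMod 2 => dot g x = 1 := by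
    apply Finset.filter_congr; intro x _
    constructor
    · rintro ⟨-, h⟩; exact hone _ h
    · intro h
      refine ⟨?_, by rw [h]; decide⟩
      rintro rfl; rw [dot_zero] at h; exact absurd h (by decide)
  rw [hset, card_dot_one hg]

/-- For `n ≥ 2`, summing `p^{|S|} (1-p)^{2^n - 1 - |S|}` over all subsets `S`
of the nonzero elements of `(ZMod 2)^n` whose elements sum to zero gives
`2^{-n} + (1 - 2^{-n}) (1 - 2p)^{2^{n-1}}`. -/
theorem sum_over_zero_sum_subsets (n : ℕ) (hn : 2 ≤ n) (p : ℝ) :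
    ∑ S ∈ (univ.filter fun g : Fin n → ZMod 2 => g ≠ 0).powerset.filter
        (fun S => ∑ s ∈ S, s = 0),
      p ^ S.card * (1 - p) ^ (2 ^ n - 1 - S.card)
    = ((2 : ℝ) ^ n)⁻¹ + (1 - ((2 : ℝ) ^ n)⁻¹) * (1 - 2 * p) ^ 2 ^ (n - 1) := by
  classical
  set E := (univ.filter fun g : Fin n → ZMod 2 => g ≠ 0) with hE
  have hEcard : E.card = 2 ^ n - 1 := by
    rw [hE, Finset.filter_ne', Finset.card_erase_of_mem (Finset.mem_univ _), Finset.card_univ]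
    simp [Fintype.card_fun]
  -- Step 1: insert indicator
  rw [Finset.sum_filter]
  have step1 : ∀ S ∈ E.powerset,
      (if (∑ s ∈ S, s) = 0 then p ^ S.card * (1 - p) ^ (2 ^ n - 1 - S.card) else 0)
      = ((2:ℝ)^n)⁻¹ * ∑ g : Fin n → ZMod 2,
          (p ^ S.card * (1 - p) ^ (2 ^ n - 1 - S.card)) * ∏ s ∈ S, mm (dot g s) := by
    intro S _
    have : ∀ g : Fin n → ZMod 2, ∏ s ∈ S, mm (dot g s) = mm (dot g (∑ s ∈ S, s)) := by
      intro g; rw [dot_sum, mm_sum]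
    simp_rw [this, ← Finset.mul_sum, sum_mm_dot]
    by_cases h : (∑ s ∈ S, s) = 0
    · rw [if_pos h, if_pos h]
      field_simp
    · rw [if_neg h, if_neg h]; ring
  rw [Finset.sum_congr rfl step1, ← Finset.mul_sum, Finset.sum_comm]
  -- Step 2: for each g, evaluate the inner sum via prod_add
  have step2 : ∀ g : Fin n → ZMod 2,
      ∑ S ∈ E.powerset, (p ^ S.card * (1 - p) ^ (2 ^ n - 1 - S.card)) * ∏ s ∈ S, mm (dot g s)
      = ∏ s ∈ E, (p * mm (dot g s) + (1 - p)) := by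
    intro g
    rw [Finset.prod_add]
    apply Finset.sum_congr rfl
    intro S hS
    rw [Finset.mem_powerset] at hS
    rw [Finset.prod_mul_distrib, Finset.prod_const, Finset.prod_const,
      Finset.card_sdiff_of_subset hS, hEcard]
    ring
  rw [Finset.sum_congr rfl (fun g _ => step2 g)]
  -- Step 3: split off g = 0
  rw [← Finset.add_sum_erase _ _ (Finset.mem_univ (0 : Fin n → ZMod 2))]
  have h0 : ∏ s ∈ E, (p * mm (dot 0 s) + (1 - p)) = 1 := by
    rw [Finset.prod_congr rfl (fun s _ => by rw [dot_zero', mm_zero])]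
    simp
  have hrest : ∀ g ∈ (univ : Finset (Fin n → ZMod 2)).erase 0,
      ∏ s ∈ E, (p * mm (dot g s) + (1 - p)) = (1 - 2*p) ^ 2 ^ (n - 1) := by
    intro g hg
    exact prod_E p (Finset.ne_of_mem_erase hg)
  rw [h0, Finset.sum_congr rfl hrest, Finset.sum_const, Finset.card_erase_of_mem (Finset.mem_univ _),
    Finset.card_univ]
  have h2n : ((Fintype.card (Fin n → ZMod 2) - 1 : ℕ) : ℝ) = 2^n - 1 := by
    have : Fintype.card (Fin n → ZMod 2) = 2^n := by simp [Fintype.card_fun]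
    rw [this]
    have : (1:ℕ) ≤ 2^n := Nat.one_le_two_pow
    push_cast [this]; ring
  rw [nsmul_eq_mul, h2n]
  have hpne : (2:ℝ)^n ≠ 0 := by positivity
  field_simp
end

section
/- (MacWilliams identity for binary codes.) Let C be a linear code of length N over the field with two elements, i.e., a linear subspace C ⊆ (ZMod 2)^N, and let C^⊥ = { v : ∀ u ∈ C, Σ_i u_i v_i = 0 } be its dual code. Define the weight enumerator W_C(x,y) = Σ_{u∈C} x^{N − wt(u)} y^{wt(u)}, where wt(u) is the Hamming weight of u. Then for all real (or complex) x, y: W_C(x,y) = |C^⊥|^{-1} · W_{C^⊥}(x + y, x − y). -/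
open Finset Classical

/-- The Hamming weight of a word in `(ZMod 2)^N`. -/
def hammingWt {N : ℕ} (u : Fin N → ZMod 2) : ℕ :=
  (univ.filter fun i => u i ≠ 0).card

noncomputable def chi (a : ZMod 2) : ℝ := if a = 0 then 1 else -1

lemma zmod2_cases (a : ZMod 2) : a = 0 ∨ a = 1 := by fin_cases a; exacts [Or.inl rfl, Or.inr rfl]

lemma chi_zero : chi 0 = 1 := by simp [chi]

lemma chi_add (a b : ZMod 2) : chi (a + b) = chi a * chi b := by
  rcases zmod2_cases a with h|h <;> rcases zmod2_cases b with h'|h' <;>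
    subst h <;> subst h' <;>
    simp only [chi, add_zero, zero_add, (by decide : (1+1:ZMod 2) = 0)] <;> norm_num

lemma chi_sum {ι : Type*} (s : Finset ι) (f : ι → ZMod 2) :
    chi (∑ i ∈ s, f i) = ∏ i ∈ s, chi (f i) := by
  induction s using Finset.cons_induction with
  | empty => simp [chi_zero]
  | cons a s ha ih => rw [Finset.sum_cons, Finset.prod_cons, chi_add, ih]

lemma sum_zmod2 (f : ZMod 2 → ℝ) : ∑ a, f a = f 0 + f 1 := by
  have : (univ : Finset (ZMod 2)) = {0, 1} := by decide
  simp [this]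

lemma wt_le {N : ℕ} (u : Fin N → ZMod 2) : hammingWt u ≤ N := by
  simpa [hammingWt] using (Finset.card_filter_le univ fun i => u i ≠ 0)

lemma prod_ite_wt {N : ℕ} (v : Fin N → ZMod 2) (a b : ℝ) :
    ∏ i, (if v i = 0 then a else b) = a ^ (N - hammingWt v) * b ^ hammingWt v := by
  rw [Finset.prod_ite, Finset.prod_const, Finset.prod_const]
  have h := Finset.card_filter_add_card_filter_not
    (s := (univ : Finset (Fin N))) (p := fun i => v i = 0)
  simp only [Finset.card_univ, Fintype.card_fin] at h
  have h1 : (univ.filter fun i => ¬ v i = 0).card = hammingWt v := rfl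
  have h2 : (univ.filter fun i => v i = 0).card = N - hammingWt v := by omega
  rw [h1, h2]

/-- The dot-product bilinear form on `(ZMod 2)^N`. -/
noncomputable def dotB (N : ℕ) : LinearMap.BilinForm (ZMod 2) (Fin N → ZMod 2) :=
  LinearMap.mk₂ (ZMod 2) (fun u v => ∑ i, u i * v i)
    (by intro u u' v; simp [add_mul, Finset.sum_add_distrib])
    (by intro c u v; simp [Finset.mul_sum, mul_assoc])
    (by intro u v v'; simp [mul_add, Finset.sum_add_distrib])
    (by intro c u v; simp [Finset.mul_sum, mul_assoc, mul_left_comm])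

lemma dotB_apply {N : ℕ} (u v : Fin N → ZMod 2) : dotB N u v = ∑ i, u i * v i := rfl

lemma dotB_symm {N : ℕ} (u v : Fin N → ZMod 2) : dotB N u v = dotB N v u := by
  simp [dotB_apply, mul_comm]

lemma dotB_nondegenerate (N : ℕ) : (dotB N).Nondegenerate := by
  refine (LinearMap.IsRefl.nondegenerate_iff_separatingLeft (fun u v h => by rwa [dotB_symm])).2 ?_
  intro u hu
  funext j
  have h := hu (Pi.single j 1)
  rw [dotB_apply] at h
  rw [Finset.sum_eq_single j (fun i _ hi => by simp [Pi.single_eq_of_ne hi]) (by simp)] at h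
  simpa using h

lemma dotB_refl (N : ℕ) : (dotB N).IsRefl := by
  intro u v h
  rwa [dotB_symm]

lemma mem_dual_iff {N : ℕ} (C : Submodule (ZMod 2) (Fin N → ZMod 2)) (v : Fin N → ZMod 2) :
    v ∈ (dotB N).orthogonal C ↔ ∀ u ∈ C, ∑ i, u i * v i = 0 := by
  rw [LinearMap.BilinForm.mem_orthogonal_iff]
  rfl

/-- Expansion of one term of the dual weight enumerator as a full-space character sum. -/
lemma expand_term {N : ℕ} (v : Fin N → ZMod 2) (x y : ℝ) :
    (x + y) ^ (N - hammingWt v) * (x - y) ^ hammingWt v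
      = ∑ u : Fin N → ZMod 2,
          chi (∑ i, u i * v i) * (x ^ (N - hammingWt u) * y ^ hammingWt u) := by
  rw [← prod_ite_wt v (x + y) (x - y)]
  have step : ∀ i : Fin N, (if v i = 0 then x + y else x - y)
      = ∑ b : ZMod 2, chi (b * v i) * (if b = 0 then x else y) := by
    intro i
    rw [sum_zmod2]
    rcases zmod2_cases (v i) with h | h <;> rw [h] <;> simp [chi] <;> ring
  calc ∏ i, (if v i = 0 then x + y else x - y)
      = ∏ i, ∑ b : ZMod 2, chi (b * v i) * (if b = 0 then x else y) := by
        exact Finset.prod_congr rfl fun i _ => step i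
    _ = ∑ u : Fin N → ZMod 2, ∏ i, chi (u i * v i) * (if u i = 0 then x else y) :=
        Fintype.prod_sum (fun i b => chi (b * v i) * (if b = 0 then x else y))
    _ = ∑ u : Fin N → ZMod 2,
          chi (∑ i, u i * v i) * (x ^ (N - hammingWt u) * y ^ hammingWt u) := by
        refine Finset.sum_congr rfl fun u _ => ?_
        rw [Finset.prod_mul_distrib, ← chi_sum, prod_ite_wt]

lemma char_sum {N : ℕ} (C : Submodule (ZMod 2) (Fin N → ZMod 2)) (u : Fin N → ZMod 2) :
    ∑ v ∈ univ.filter (fun v : Fin N → ZMod 2 => ∀ w ∈ C, ∑ i, w i * v i = 0),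
        chi (∑ i, u i * v i)
      = if u ∈ C
        then ((univ.filter fun v : Fin N → ZMod 2 => ∀ w ∈ C, ∑ i, w i * v i = 0).card : ℝ)
        else 0 := by
  set D := univ.filter (fun v : Fin N → ZMod 2 => ∀ w ∈ C, ∑ i, w i * v i = 0) with hD
  have hmemD : ∀ v : Fin N → ZMod 2, v ∈ D ↔ v ∈ (dotB N).orthogonal C := by
    intro v
    rw [hD, Finset.mem_filter, mem_dual_iff]
    simp
  by_cases hu : u ∈ C
  · rw [if_pos hu]
    rw [Finset.sum_congr rfl (fun v hv => ?_), Finset.sum_const, nsmul_eq_mul, mul_one]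
    rw [hD, Finset.mem_filter] at hv
    rw [hv.2 u hu, chi_zero]
  · rw [if_neg hu]
    -- u ∉ C = orthogonal (orthogonal C), so there is v₀ ∈ D with ∑ u i * v₀ i ≠ 0
    have hC : (dotB N).orthogonal ((dotB N).orthogonal C) = C :=
      LinearMap.BilinForm.orthogonal_orthogonal (dotB_nondegenerate N) (dotB_refl N) C
    have hu' : u ∉ (dotB N).orthogonal ((dotB N).orthogonal C) := by rwa [hC]
    rw [LinearMap.BilinForm.mem_orthogonal_iff] at hu'
    push_neg at hu'
    obtain ⟨v₀, hv₀D, hv₀⟩ := hu'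
    have hval : ∑ i, u i * v₀ i ≠ 0 := by
      intro h
      exact hv₀ (by rwa [dotB_symm, dotB_apply])
    -- the involution v ↦ v + v₀ negates each term
    have hv₀D' : v₀ ∈ D := (hmemD v₀).2 hv₀D
    have hneg : chi (∑ i, u i * v₀ i) = -1 := by rw [chi, if_neg hval]
    have hclosed : ∀ v ∈ D, v + v₀ ∈ D := fun v hv =>
      (hmemD _).2 (Submodule.add_mem _ ((hmemD v).1 hv) hv₀D)
    have hself : ∀ v : Fin N → ZMod 2, v + v₀ + v₀ = v := by
      intro v
      funext i
      simp only [Pi.add_apply]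
      rw [add_assoc, CharTwo.add_self_eq_zero, add_zero]
    have key : ∑ v ∈ D, chi (∑ i, u i * v i)
        = ∑ v ∈ D, chi (∑ i, u i * ((v + v₀) i)) := by
      refine Finset.sum_nbij' (fun v => v + v₀) (fun v => v + v₀) hclosed hclosed
        (fun v _ => hself v) (fun v _ => hself v) (fun v _ => ?_)
      rw [hself v]
    have key2 : ∀ v : Fin N → ZMod 2,
        chi (∑ i, u i * ((v + v₀) i)) = -chi (∑ i, u i * v i) := by
      intro v
      have : ∑ i, u i * ((v + v₀) i) = (∑ i, u i * v i) + ∑ i, u i * v₀ i := by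
        simp [Pi.add_apply, mul_add, Finset.sum_add_distrib]
      rw [this, chi_add, hneg]
      ring
    rw [Finset.sum_congr rfl (fun v _ => key2 v), Finset.sum_neg_distrib] at key
    linarith [key]


/-- MacWilliams identity: for a binary linear code `C ⊆ (ZMod 2)^N` with dual
code `C^⊥ = {v : ∀ u ∈ C, Σ_i u_i v_i = 0}`, the weight enumerator satisfies
`W_C(x, y) = |C^⊥|⁻¹ · W_{C^⊥}(x + y, x - y)`. -/
theorem macwilliams_identity (N : ℕ) (C : Submodule (ZMod 2) (Fin N → ZMod 2)) (x y : ℝ) :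
    ∑ u ∈ univ.filter (fun u : Fin N → ZMod 2 => u ∈ C),
        x ^ (N - hammingWt u) * y ^ hammingWt u
      = ((univ.filter fun v : Fin N → ZMod 2 => ∀ u ∈ C, ∑ i, u i * v i = 0).card : ℝ)⁻¹ *
        ∑ v ∈ univ.filter (fun v : Fin N → ZMod 2 => ∀ u ∈ C, ∑ i, u i * v i = 0),
          (x + y) ^ (N - hammingWt v) * (x - y) ^ hammingWt v := by
  set D := univ.filter (fun v : Fin N → ZMod 2 => ∀ u ∈ C, ∑ i, u i * v i = 0) with hD
  have hD0 : (0 : Fin N → ZMod 2) ∈ D := by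
    rw [hD, Finset.mem_filter]
    exact ⟨Finset.mem_univ _, fun u _ => by simp⟩
  have hcard : (D.card : ℝ) ≠ 0 := by
    exact_mod_cast Finset.card_ne_zero_of_mem hD0
  have expand : ∑ v ∈ D, (x + y) ^ (N - hammingWt v) * (x - y) ^ hammingWt v
      = (D.card : ℝ) * ∑ u ∈ univ.filter (fun u : Fin N → ZMod 2 => u ∈ C),
          x ^ (N - hammingWt u) * y ^ hammingWt u := by
    calc ∑ v ∈ D, (x + y) ^ (N - hammingWt v) * (x - y) ^ hammingWt v
        = ∑ v ∈ D, ∑ u : Fin N → ZMod 2,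
            chi (∑ i, u i * v i) * (x ^ (N - hammingWt u) * y ^ hammingWt u) :=
          Finset.sum_congr rfl fun v _ => expand_term v x y
      _ = ∑ u : Fin N → ZMod 2, ∑ v ∈ D,
            chi (∑ i, u i * v i) * (x ^ (N - hammingWt u) * y ^ hammingWt u) :=
          Finset.sum_comm
      _ = ∑ u : Fin N → ZMod 2,
            (if u ∈ C then (D.card : ℝ) else 0) * (x ^ (N - hammingWt u) * y ^ hammingWt u) := by
          refine Finset.sum_congr rfl fun u _ => ?_
          rw [← Finset.sum_mul, char_sum C u]
      _ = ∑ u ∈ univ.filter (fun u : Fin N → ZMod 2 => u ∈ C),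
            (D.card : ℝ) * (x ^ (N - hammingWt u) * y ^ hammingWt u) := by
          rw [Finset.sum_filter]
          refine Finset.sum_congr rfl fun u _ => ?_
          by_cases h : u ∈ C <;> simp [h]
      _ = (D.card : ℝ) * ∑ u ∈ univ.filter (fun u : Fin N → ZMod 2 => u ∈ C),
            x ^ (N - hammingWt u) * y ^ hammingWt u := by rw [Finset.mul_sum]
  rw [expand, ← mul_assoc, inv_mul_cancel₀ hcard, one_mul]
end

section
/- Let F be a finite set and let p : F → ℝ. Then the sum over all subsets S ⊆ F of odd cardinality of ∏_{f∈S} p(f) · ∏_{f∈F∖S} (1 − p(f)) equals (1 − ∏_{f∈F} (1 − 2p(f)))/2. -/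
open Finset

/-- For a finite set `F` and `p : F → ℝ`, the sum over all odd-cardinality
subsets `S ⊆ F` of `∏_{f∈S} p f · ∏_{f∈F∖S} (1 - p f)` equals
`(1 - ∏_{f∈F} (1 - 2 p f)) / 2`. -/
theorem odd_subset_sum {α : Type*} [DecidableEq α] (F : Finset α) (p : α → ℝ) :
    ∑ S ∈ F.powerset.filter (fun S => Odd S.card),
      (∏ f ∈ S, p f) * ∏ f ∈ F \ S, (1 - p f)
    = (1 - ∏ f ∈ F, (1 - 2 * p f)) / 2 := by
  have h1 : ∑ S ∈ F.powerset, (∏ f ∈ S, p f) * ∏ f ∈ F \ S, (1 - p f)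
      = ∏ f ∈ F, (p f + (1 - p f)) := (Finset.prod_add _ _ _).symm
  have h2 : ∑ S ∈ F.powerset, (∏ f ∈ S, (-p f)) * ∏ f ∈ F \ S, (1 - p f)
      = ∏ f ∈ F, (-p f + (1 - p f)) := (Finset.prod_add _ _ _).symm
  have key : ∑ S ∈ F.powerset.filter (fun S => Odd S.card),
      (∏ f ∈ S, p f) * ∏ f ∈ F \ S, (1 - p f)
      = ∑ S ∈ F.powerset, ((∏ f ∈ S, p f) * ∏ f ∈ F \ S, (1 - p f)
          - (∏ f ∈ S, (-p f)) * ∏ f ∈ F \ S, (1 - p f)) / 2 := by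
    rw [Finset.sum_filter]
    refine Finset.sum_congr rfl fun S _ => ?_
    have hprod : ∏ f ∈ S, (-p f) = (-1) ^ S.card * ∏ f ∈ S, p f := by
      rw [← Finset.prod_const, ← Finset.prod_mul_distrib]
      exact Finset.prod_congr rfl fun f _ => by ring
    rcases Nat.even_or_odd S.card with he | ho
    · rw [if_neg (by simpa [Nat.not_odd_iff_even] using he), hprod, he.neg_one_pow]
      ring
    · rw [if_pos ho, hprod, ho.neg_one_pow]
      ring
  rw [key, ← Finset.sum_div, Finset.sum_sub_distrib, h1, h2]
  have : ∏ f ∈ F, (p f + (1 - p f)) = 1 := by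
    simp
  rw [this]
  congr 2
  exact Finset.prod_congr rfl fun f _ => by ring
end
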